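/- Let ν ∈ ℝ, a > 0, m ∈ ℕ, λ = (ν + 2m)/a with λ > -1, and let f⁻_l(r) = (2^{λ+1} l! / (a^λ Γ(λ + l + 1)))^{1/2} r^{-(ν + m)} L_l^{(λ)}((2/a) r^{-a}) e^{-(1/a) r^{-a}}. Then for every l ∈ ℕ and r > 0, (1/(-a))( r^{-a} f⁻_l(r) - r^{a}( r² (f⁻_l)''(r) + (ν + 1) r (f⁻_l)'(r) - m(ν + m) f⁻_l(r) ) ) = (-λ - 2l - 1) f⁻_l(r); that is, f⁻_l is an eigenfunction of the operator π_{-a}(𝐤) = (1/(-a))(r^{-a} - r^{a}(ϑ - m)(ϑ + ν + m)) with eigenvalue λ_{k,-a,m} - 2l - 1, where λ_{k,-a,m} = -λ. -/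

import Mathlib

open Real

/-- The generalized Laguerre polynomial
`L_l^{(λ)}(t) = ∑_{j=0}^{l} ((-1)^j / (j!(l-j)!)) (Γ(λ+l+1)/Γ(λ+j+1)) t^j`. -/
noncomputable def laguerre (lam : ℝ) (l : ℕ) (t : ℝ) : ℝ :=
  ∑ j ∈ Finset.range (l + 1),
    (-1 : ℝ) ^ j / (j.factorial * (l - j).factorial) *
      (Real.Gamma (lam + l + 1) / Real.Gamma (lam + j + 1)) * t ^ j

/-- `f⁻_l(r) = (2^{λ+1} l!/(a^λ Γ(λ+l+1)))^{1/2} r^{-(ν+m)} L_l^{(λ)}((2/a) r^{-a})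
e^{-(1/a) r^{-a}}`. -/
noncomputable def laguerreFunNeg (ν a : ℝ) (m : ℕ) (l : ℕ) (r : ℝ) : ℂ :=
  ((Real.sqrt ((2 : ℝ) ^ ((ν + 2 * m) / a + 1) * l.factorial /
        (a ^ ((ν + 2 * m) / a) * Real.Gamma ((ν + 2 * m) / a + l + 1))) *
      r ^ (-(ν + m)) * laguerre ((ν + 2 * m) / a) l ((2 / a) * r ^ (-a)) *
      Real.exp (-(1 / a) * r ^ (-a)) : ℝ) : ℂ)

/-- First derivative of the Laguerre polynomial (termwise formula). -/
noncomputable def lagD (lam : ℝ) (l : ℕ) (t : ℝ) : ℝ :=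
  ∑ j ∈ Finset.range (l + 1),
    (-1 : ℝ) ^ j / (j.factorial * (l - j).factorial) *
      (Real.Gamma (lam + l + 1) / Real.Gamma (lam + j + 1)) * (j * t ^ (j - 1))

/-- Second derivative of the Laguerre polynomial (termwise formula). -/
noncomputable def lagDD (lam : ℝ) (l : ℕ) (t : ℝ) : ℝ :=
  ∑ j ∈ Finset.range (l + 1),
    (-1 : ℝ) ^ j / (j.factorial * (l - j).factorial) *
      (Real.Gamma (lam + l + 1) / Real.Gamma (lam + j + 1)) * (j * ((j - 1 : ℕ) * t ^ (j - 1 - 1)))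

lemma hasDerivAt_laguerre (lam : ℝ) (l : ℕ) (t : ℝ) :
    HasDerivAt (laguerre lam l) (lagD lam l t) t := by
  unfold laguerre lagD
  exact HasDerivAt.fun_sum fun j _ => (hasDerivAt_pow j t).const_mul _

lemma hasDerivAt_lagD (lam : ℝ) (l : ℕ) (t : ℝ) :
    HasDerivAt (lagD lam l) (lagDD lam l t) t := by
  unfold lagD lagDD
  exact HasDerivAt.fun_sum fun j _ => (((hasDerivAt_pow (j - 1) t).const_mul (j : ℝ)).const_mul _)

lemma laguerre_ode (lam : ℝ) (hlam : -1 < lam) (l : ℕ) (t : ℝ) :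
    t * lagDD lam l t + (lam + 1 - t) * lagD lam l t + l * laguerre lam l t = 0 := by
  unfold laguerre lagD lagDD
  rw [Finset.mul_sum, Finset.mul_sum, Finset.mul_sum, ← Finset.sum_add_distrib,
    ← Finset.sum_add_distrib]
  have hsplit : ∀ j ∈ Finset.range (l + 1),
      t * ((-1 : ℝ) ^ j / (j.factorial * (l - j).factorial) *
          (Real.Gamma (lam + l + 1) / Real.Gamma (lam + j + 1)) *
          (j * ((j - 1 : ℕ) * t ^ (j - 1 - 1)))) +
        (lam + 1 - t) * ((-1 : ℝ) ^ j / (j.factorial * (l - j).factorial) *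
          (Real.Gamma (lam + l + 1) / Real.Gamma (lam + j + 1)) * (j * t ^ (j - 1))) +
        (l : ℝ) * ((-1 : ℝ) ^ j / (j.factorial * (l - j).factorial) *
          (Real.Gamma (lam + l + 1) / Real.Gamma (lam + j + 1)) * t ^ j) =
      ((-1 : ℝ) ^ j / (j.factorial * (l - j).factorial) *
          (Real.Gamma (lam + l + 1) / Real.Gamma (lam + j + 1)) * (j * (lam + j) * t ^ (j - 1))) +
        ((-1 : ℝ) ^ j / (j.factorial * (l - j).factorial) *
          (Real.Gamma (lam + l + 1) / Real.Gamma (lam + j + 1)) * (((l : ℝ) - j) * t ^ j)) := by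
    intro j _
    match j with
    | 0 => norm_num; ring
    | 1 => norm_num; ring
    | (n + 2) =>
      simp only [Nat.add_sub_cancel, Nat.succ_sub_one]
      push_cast
      try ring
  rw [Finset.sum_congr rfl hsplit, Finset.sum_add_distrib]
  rw [Finset.sum_range_succ' (fun j => (-1 : ℝ) ^ j / (j.factorial * (l - j).factorial) *
      (Real.Gamma (lam + l + 1) / Real.Gamma (lam + j + 1)) * (j * (lam + j) * t ^ (j - 1))) l]
  rw [Finset.sum_range_succ (fun j => (-1 : ℝ) ^ j / (j.factorial * (l - j).factorial) *
      (Real.Gamma (lam + l + 1) / Real.Gamma (lam + j + 1)) * (((l : ℝ) - j) * t ^ j)) l]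
  simp only [Nat.cast_zero, zero_mul, mul_zero, add_zero, sub_self, zero_add]
  rw [← Finset.sum_add_distrib]
  apply Finset.sum_eq_zero
  intro j hj
  have hjl : j < l := Finset.mem_range.1 hj
  have hG0 : Real.Gamma (lam + j + 1) ≠ 0 := by
    have : (0 : ℝ) < lam + j + 1 := by
      have : (0:ℝ) ≤ j := Nat.cast_nonneg j
      linarith
    exact (Real.Gamma_pos_of_pos this).ne'
  have hne4 : (lam + (j:ℝ) + 1) ≠ 0 := by
    have : (0:ℝ) ≤ j := Nat.cast_nonneg j
    intro h; linarith [hlam]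
  have hGrec : Real.Gamma (lam + (j + 1 : ℕ) + 1) = (lam + j + 1) * Real.Gamma (lam + j + 1) := by
    have h := Real.Gamma_add_one hne4
    push_cast
    rw [show lam + ((j : ℝ) + 1) + 1 = (lam + j + 1) + 1 by ring, h]
  have hfac : (l - j).factorial = (l - j) * (l - (j + 1)).factorial := by
    have h1 : l - j = (l - (j + 1)) + 1 := by omega
    rw [h1, Nat.factorial_succ]
  have hcast : ((l - j : ℕ) : ℝ) = (l : ℝ) - j := by
    have := Nat.cast_sub (le_of_lt hjl) (R := ℝ) (m := j) (n := l)
    exact this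
  rw [hGrec]
  have hfj : ((j + 1 : ℕ).factorial : ℝ) = (j + 1) * j.factorial := by
    rw [Nat.factorial_succ]; push_cast; ring
  have hfl : ((l - j : ℕ).factorial : ℝ) = ((l : ℝ) - j) * ((l - (j + 1)).factorial : ℝ) := by
    rw [hfac]; push_cast [hcast]; ring
  have hne1 : (j.factorial : ℝ) ≠ 0 := Nat.cast_ne_zero.2 j.factorial_ne_zero
  have hne2 : ((l - (j + 1)).factorial : ℝ) ≠ 0 := Nat.cast_ne_zero.2 (l - (j+1)).factorial_ne_zero
  have hne3 : ((l : ℝ) - j) ≠ 0 := by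
    have : (j : ℝ) < l := by exact_mod_cast hjl
    linarith
  rw [hfj, hfl]
  push_cast
  field_simp
  ring

/-- The real-valued Laguerre-type function. -/
noncomputable def Fgen (C lam mu a : ℝ) (l : ℕ) (r : ℝ) : ℝ :=
  C * r ^ (-mu) * laguerre lam l ((2 / a) * r ^ (-a)) * Real.exp (-(1 / a) * r ^ (-a))

/-- Its first derivative (for `r > 0`). -/
noncomputable def F1gen (C lam mu a : ℝ) (l : ℕ) (r : ℝ) : ℝ :=
  C * Real.exp (-(1 / a) * r ^ (-a)) * r ^ (-mu) * r⁻¹ *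
    (-mu * laguerre lam l ((2 / a) * r ^ (-a)) +
      r ^ (-a) * (laguerre lam l ((2 / a) * r ^ (-a)) - 2 * lagD lam l ((2 / a) * r ^ (-a))))

/-- Its second derivative (for `r > 0`). -/
noncomputable def F2gen (C lam mu a : ℝ) (l : ℕ) (r : ℝ) : ℝ :=
  C * Real.exp (-(1 / a) * r ^ (-a)) * r ^ (-mu) * r⁻¹ * r⁻¹ *
    ((r ^ (-a) - mu - 1) *
        (-mu * laguerre lam l ((2 / a) * r ^ (-a)) +
          r ^ (-a) * (laguerre lam l ((2 / a) * r ^ (-a)) - 2 * lagD lam l ((2 / a) * r ^ (-a)))) +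
      2 * mu * r ^ (-a) * lagD lam l ((2 / a) * r ^ (-a)) -
      a * r ^ (-a) * laguerre lam l ((2 / a) * r ^ (-a)) +
      2 * a * r ^ (-a) * lagD lam l ((2 / a) * r ^ (-a)) -
      2 * (r ^ (-a)) ^ 2 * lagD lam l ((2 / a) * r ^ (-a)) +
      4 * (r ^ (-a)) ^ 2 * lagDD lam l ((2 / a) * r ^ (-a)))

lemma hasDerivAt_Fgen (C lam mu a : ℝ) (ha : a ≠ 0) (l : ℕ) {s : ℝ} (hs : 0 < s) :
    HasDerivAt (Fgen C lam mu a l) (F1gen C lam mu a l s) s := by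
  have hsne : s ≠ 0 := hs.ne'
  have ht : HasDerivAt (fun u : ℝ => (2 / a) * u ^ (-a)) ((2 / a) * (-a * s ^ (-a - 1))) s :=
    (Real.hasDerivAt_rpow_const (Or.inl hsne)).const_mul _
  have hPt : HasDerivAt (fun u : ℝ => laguerre lam l ((2 / a) * u ^ (-a)))
      (lagD lam l ((2 / a) * s ^ (-a)) * ((2 / a) * (-a * s ^ (-a - 1)))) s :=
    (hasDerivAt_laguerre lam l _).comp s ht
  have hY : HasDerivAt (fun u : ℝ => C * u ^ (-mu)) (C * (-mu * s ^ (-mu - 1))) s :=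
    (Real.hasDerivAt_rpow_const (Or.inl hsne)).const_mul _
  have hEi : HasDerivAt (fun u : ℝ => -(1 / a) * u ^ (-a)) (-(1 / a) * (-a * s ^ (-a - 1))) s :=
    (Real.hasDerivAt_rpow_const (Or.inl hsne)).const_mul _
  have hE : HasDerivAt (fun u : ℝ => Real.exp (-(1 / a) * u ^ (-a)))
      (Real.exp (-(1 / a) * s ^ (-a)) * (-(1 / a) * (-a * s ^ (-a - 1)))) s := hEi.exp
  have h := (hY.fun_mul hPt).fun_mul hE
  refine h.congr_deriv ?_
  have e1 : s ^ (-mu - 1) = s ^ (-mu) * s⁻¹ := by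
    rw [show -mu - 1 = -mu + (-1) by ring, Real.rpow_add hs, Real.rpow_neg_one]
  have e2 : s ^ (-a - 1) = s ^ (-a) * s⁻¹ := by
    rw [show -a - 1 = -a + (-1) by ring, Real.rpow_add hs, Real.rpow_neg_one]
  have c1 : (2 / a) * (-a * (s ^ (-a) * s⁻¹)) = -2 * (s ^ (-a) * s⁻¹) := by
    field_simp
  have c2 : -(1 / a) * (-a * (s ^ (-a) * s⁻¹)) = s ^ (-a) * s⁻¹ := by
    field_simp
  rw [F1gen, e1, e2, c1, c2]
  ring

lemma hasDerivAt_F1gen (C lam mu a : ℝ) (ha : a ≠ 0) (l : ℕ) {s : ℝ} (hs : 0 < s) :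
    HasDerivAt (F1gen C lam mu a l) (F2gen C lam mu a l s) s := by
  have hsne : s ≠ 0 := hs.ne'
  have ht : HasDerivAt (fun u : ℝ => (2 / a) * u ^ (-a)) ((2 / a) * (-a * s ^ (-a - 1))) s :=
    (Real.hasDerivAt_rpow_const (Or.inl hsne)).const_mul _
  have hPt : HasDerivAt (fun u : ℝ => laguerre lam l ((2 / a) * u ^ (-a)))
      (lagD lam l ((2 / a) * s ^ (-a)) * ((2 / a) * (-a * s ^ (-a - 1)))) s :=
    (hasDerivAt_laguerre lam l _).comp s ht
  have hQt : HasDerivAt (fun u : ℝ => lagD lam l ((2 / a) * u ^ (-a)))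
      (lagDD lam l ((2 / a) * s ^ (-a)) * ((2 / a) * (-a * s ^ (-a - 1)))) s :=
    (hasDerivAt_lagD lam l _).comp s ht
  have hY : HasDerivAt (fun u : ℝ => u ^ (-mu)) (-mu * s ^ (-mu - 1)) s :=
    Real.hasDerivAt_rpow_const (Or.inl hsne)
  have hx : HasDerivAt (fun u : ℝ => u ^ (-a)) (-a * s ^ (-a - 1)) s :=
    Real.hasDerivAt_rpow_const (Or.inl hsne)
  have hEi : HasDerivAt (fun u : ℝ => -(1 / a) * u ^ (-a)) (-(1 / a) * (-a * s ^ (-a - 1))) s :=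
    (Real.hasDerivAt_rpow_const (Or.inl hsne)).const_mul _
  have hE : HasDerivAt (fun u : ℝ => C * Real.exp (-(1 / a) * u ^ (-a)))
      (Real.exp (-(1 / a) * s ^ (-a)) * (-(1 / a) * (-a * s ^ (-a - 1))) * C) s := by
    simpa [mul_comm] using hEi.exp.const_mul C
  have hinv : HasDerivAt (fun u : ℝ => u⁻¹) (-(s ^ 2)⁻¹) s := hasDerivAt_inv hsne
  have hG : HasDerivAt (fun u : ℝ =>
      -mu * laguerre lam l ((2 / a) * u ^ (-a)) +
        u ^ (-a) * (laguerre lam l ((2 / a) * u ^ (-a)) - 2 * lagD lam l ((2 / a) * u ^ (-a))))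
      (-mu * (lagD lam l ((2 / a) * s ^ (-a)) * ((2 / a) * (-a * s ^ (-a - 1)))) +
        ((-a * s ^ (-a - 1)) *
            (laguerre lam l ((2 / a) * s ^ (-a)) - 2 * lagD lam l ((2 / a) * s ^ (-a))) +
          s ^ (-a) * (lagD lam l ((2 / a) * s ^ (-a)) * ((2 / a) * (-a * s ^ (-a - 1))) -
            2 * (lagDD lam l ((2 / a) * s ^ (-a)) * ((2 / a) * (-a * s ^ (-a - 1))))))) s :=
    (hPt.const_mul (-mu)).add (hx.mul (hPt.sub (hQt.const_mul 2)))
  have h := (((hE.fun_mul hY).fun_mul hinv).fun_mul hG)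
  refine h.congr_deriv ?_
  have e1 : s ^ (-mu - 1) = s ^ (-mu) * s⁻¹ := by
    rw [show -mu - 1 = -mu + (-1) by ring, Real.rpow_add hs, Real.rpow_neg_one]
  have e2 : s ^ (-a - 1) = s ^ (-a) * s⁻¹ := by
    rw [show -a - 1 = -a + (-1) by ring, Real.rpow_add hs, Real.rpow_neg_one]
  have e3 : ((s : ℝ) ^ 2)⁻¹ = s⁻¹ * s⁻¹ := by
    rw [sq, mul_inv]
  have c1 : ∀ X : ℝ, (2 / a) * (-a * X) = -2 * X := by intro X; field_simp
  have c2 : ∀ X : ℝ, -(1 / a) * (-a * X) = X := by intro X; field_simp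
  rw [F2gen, e2, e3, c1, c2, e1]
  ring


/-- `f⁻_l` is an eigenfunction of `π_{-a}(𝐤) = (1/(-a))(r^{-a} - r^a (ϑ - m)(ϑ + ν + m))`
with eigenvalue `λ_{k,-a,m} - 2l - 1 = -λ - 2l - 1`, where `λ = (ν + 2m)/a`. -/
theorem laguerreFunNeg_eigenfunction (ν a : ℝ) (ha : 0 < a) (m : ℕ)
    (hlam : -1 < (ν + 2 * m) / a) (l : ℕ) (r : ℝ) (hr : 0 < r) :
    (1 / (-a : ℂ)) *
        (((r ^ (-a) : ℝ) : ℂ) * laguerreFunNeg ν a m l r -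
          ((r ^ a : ℝ) : ℂ) *
            ((r : ℂ) ^ 2 * deriv (deriv (laguerreFunNeg ν a m l)) r +
              ((ν : ℂ) + 1) * (r : ℂ) * deriv (laguerreFunNeg ν a m l) r -
              (m : ℂ) * ((ν : ℂ) + (m : ℂ)) * laguerreFunNeg ν a m l r))
      = (-(((ν + 2 * m) / a : ℝ) : ℂ) - 2 * l - 1) * laguerreFunNeg ν a m l r := by
  have ha' : a ≠ 0 := ha.ne'
  set C₀ : ℝ := Real.sqrt ((2 : ℝ) ^ ((ν + 2 * m) / a + 1) * l.factorial /
      (a ^ ((ν + 2 * m) / a) * Real.Gamma ((ν + 2 * m) / a + l + 1))) with hC₀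
  have hFeq : laguerreFunNeg ν a m l
      = fun s => ((Fgen C₀ ((ν + 2 * m) / a) (ν + m) a l s : ℝ) : ℂ) := rfl
  have hfd : ∀ s ∈ Set.Ioi (0 : ℝ), HasDerivAt (laguerreFunNeg ν a m l)
      ((F1gen C₀ ((ν + 2 * m) / a) (ν + m) a l s : ℝ) : ℂ) s := by
    intro s hs
    rw [hFeq]
    exact (hasDerivAt_Fgen _ _ _ _ ha' l hs).ofReal_comp
  have h1 : deriv (laguerreFunNeg ν a m l) r
      = ((F1gen C₀ ((ν + 2 * m) / a) (ν + m) a l r : ℝ) : ℂ) := (hfd r hr).deriv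
  have hev : deriv (laguerreFunNeg ν a m l)
      =ᶠ[nhds r] fun s => ((F1gen C₀ ((ν + 2 * m) / a) (ν + m) a l s : ℝ) : ℂ) := by
    filter_upwards [Ioi_mem_nhds hr] with s hs
    exact (hfd s hs).deriv
  have h2 : deriv (deriv (laguerreFunNeg ν a m l)) r
      = ((F2gen C₀ ((ν + 2 * m) / a) (ν + m) a l r : ℝ) : ℂ) := by
    rw [hev.deriv_eq]
    exact ((hasDerivAt_F1gen _ _ _ _ ha' l hr).ofReal_comp).deriv
  have key : r ^ (-a) * Fgen C₀ ((ν + 2 * m) / a) (ν + m) a l r -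
      r ^ a * (r ^ 2 * F2gen C₀ ((ν + 2 * m) / a) (ν + m) a l r +
        (ν + 1) * r * F1gen C₀ ((ν + 2 * m) / a) (ν + m) a l r -
        (m : ℝ) * (ν + m) * Fgen C₀ ((ν + 2 * m) / a) (ν + m) a l r)
      = (-a) * ((-((ν + 2 * m) / a) - 2 * l - 1) *
          Fgen C₀ ((ν + 2 * m) / a) (ν + m) a l r) := by
    have hode := laguerre_ode ((ν + 2 * m) / a) hlam l ((2 / a) * r ^ (-a))
    have hzx : r ^ a * r ^ (-a) = 1 := by
      rw [← Real.rpow_add hr]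
      norm_num
    have hwx : r * r⁻¹ = 1 := mul_inv_cancel₀ hr.ne'
    have hal : a * ((ν + 2 * m) / a) = ν + 2 * m := by field_simp
    have haa : a * a⁻¹ = 1 := mul_inv_cancel₀ ha'
    unfold Fgen F1gen F2gen
    set x : ℝ := r ^ (-a) with hxd
    set z : ℝ := r ^ a with hzd
    set E : ℝ := Real.exp (-(1 / a) * x) with hEd
    set Y : ℝ := r ^ (-(ν + (m : ℝ))) with hYd
    set P : ℝ := laguerre ((ν + 2 * m) / a) l (2 / a * x) with hPd
    set Q : ℝ := lagD ((ν + 2 * m) / a) l (2 / a * x) with hQd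
    set S : ℝ := lagDD ((ν + 2 * m) / a) l (2 / a * x) with hSd
    linear_combination
      (-2 * a * (C₀ * E * Y)) * hode +
      (-(P - 2 * Q) * (C₀ * E * Y)) * hal +
      (-(C₀ * E * Y) * (-((ν + m) + m + a) * P + x * P - 4 * x * Q +
          (2 * (ν + m) + 2 * m + 2 * a) * Q + 4 * x * S)) * hzx +
      (-z * (C₀ * E * Y) *
        (((x - (ν + m) - 1) * (-(ν + m) * P + x * (P - 2 * Q)) + 2 * (ν + m) * x * Q -
            a * x * P + 2 * a * x * Q - 2 * x ^ 2 * Q + 4 * x ^ 2 * S) * (r * r⁻¹ + 1) +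
          (ν + 1) * (-(ν + m) * P + x * (P - 2 * Q)))) * hwx +
      (-4 * x * (C₀ * E * Y) * (Q - S)) * haa
  rw [h1, h2]
  simp only [hFeq]
  have hX : ((r ^ (-a) : ℝ) : ℂ) * ((Fgen C₀ ((ν + 2 * m) / a) (ν + m) a l r : ℝ) : ℂ) -
      ((r ^ a : ℝ) : ℂ) *
        ((r : ℂ) ^ 2 * ((F2gen C₀ ((ν + 2 * m) / a) (ν + m) a l r : ℝ) : ℂ) +
          ((ν : ℂ) + 1) * (r : ℂ) * ((F1gen C₀ ((ν + 2 * m) / a) (ν + m) a l r : ℝ) : ℂ) -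
          (m : ℂ) * ((ν : ℂ) + (m : ℂ)) * ((Fgen C₀ ((ν + 2 * m) / a) (ν + m) a l r : ℝ) : ℂ))
      = ((-a : ℝ) : ℂ) * ((-(((ν + 2 * m) / a : ℝ) : ℂ) - 2 * l - 1) *
          ((Fgen C₀ ((ν + 2 * m) / a) (ν + m) a l r : ℝ) : ℂ)) := by
    exact_mod_cast congrArg (fun t : ℝ => (t : ℂ)) key
  rw [hX]
  have hane : ((-a : ℝ) : ℂ) ≠ 0 := by
    simp [ha']
  rw [← mul_assoc, one_div, ← Complex.ofReal_neg]
  rw [inv_mul_cancel₀ hane, one_mul]
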